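/- Let q_o > q_s > 0, γ_o > 0, γ_s > 0, η = γ_o + γ_s, and suppose condition C1 holds: η q_s/(2 q_o) < γ_o < η/2. Then the revenue function π(p_o, p_s) = γ_o p_o (1 − (p_o − p_s)/(q_o − q_s)) + γ_s p_s ((p_o − p_s)/(q_o − q_s) − p_s/q_s) attains a strict global maximum over (p_o, p_s) ∈ ℝ² at the unique point p_o* = 2 γ_o γ_s q_o (q_o − q_s)/(4 γ_o γ_s q_o − η² q_s), p_s* = η γ_o q_s (q_o − q_s)/(4 γ_o γ_s q_o − η² q_s). -/

import Mathlib

lemma revenue_aux (qo qs γo γs a b po ps : ℝ)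
    (hd : qo - qs ≠ 0) (hqs : qs ≠ 0) (hγo : γo ≠ 0)
    (e1 : γo * (qo - qs) - 2 * γo * a + (γo + γs) * b = 0)
    (e2 : (γo + γs) * a * qs - 2 * γs * qo * b = 0) :
    (γo * a * (1 - (a - b) / (qo - qs)) + γs * b * ((a - b) / (qo - qs) - b / qs)) -
      (γo * po * (1 - (po - ps) / (qo - qs)) + γs * ps * ((po - ps) / (qo - qs) - ps / qs)) =
    (γo / (qo - qs)) * (po - a - (γo + γs) * (ps - b) / (2 * γo)) ^ 2 +
      ((4 * γo * γs * qo - (γo + γs) ^ 2 * qs) / (4 * γo * (qo - qs) * qs)) * (ps - b) ^ 2 := by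
  field_simp
  linear_combination (-(po - a) * 16 * γo * qs) * e1 +
    (-(ps - b) * 16 * γo) * e2

/-- Under C1, the revenue function
`π(p_o, p_s) = γ_o p_o (1 − (p_o − p_s)/(q_o − q_s)) + γ_s p_s ((p_o − p_s)/(q_o − q_s) − p_s/q_s)`
attains a strict global maximum over `(p_o, p_s) ∈ ℝ²` at the unique point
`p_o* = 2 γ_o γ_s q_o (q_o − q_s)/(4 γ_o γ_s q_o − η² q_s)`,
`p_s* = η γ_o q_s (q_o − q_s)/(4 γ_o γ_s q_o − η² q_s)`. -/
theorem revenue_strict_global_max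
    (qo qs γo γs η : ℝ)
    (hq : qo > qs) (hqs : qs > 0)
    (hγo : 0 < γo) (hγs : 0 < γs)
    (hη : η = γo + γs)
    (hC1l : η * qs / (2 * qo) < γo) (hC1r : γo < η / 2) :
    ∀ po ps : ℝ,
      (po, ps) ≠ (2 * γo * γs * qo * (qo - qs) / (4 * γo * γs * qo - η ^ 2 * qs),
                   η * γo * qs * (qo - qs) / (4 * γo * γs * qo - η ^ 2 * qs)) →
      γo * po * (1 - (po - ps) / (qo - qs)) +
          γs * ps * ((po - ps) / (qo - qs) - ps / qs) <
        γo * (2 * γo * γs * qo * (qo - qs) / (4 * γo * γs * qo - η ^ 2 * qs)) *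
            (1 - ((2 * γo * γs * qo * (qo - qs) / (4 * γo * γs * qo - η ^ 2 * qs)) -
                  (η * γo * qs * (qo - qs) / (4 * γo * γs * qo - η ^ 2 * qs))) / (qo - qs)) +
          γs * (η * γo * qs * (qo - qs) / (4 * γo * γs * qo - η ^ 2 * qs)) *
            ((((2 * γo * γs * qo * (qo - qs) / (4 * γo * γs * qo - η ^ 2 * qs)) -
               (η * γo * qs * (qo - qs) / (4 * γo * γs * qo - η ^ 2 * qs))) / (qo - qs)) -
              (η * γo * qs * (qo - qs) / (4 * γo * γs * qo - η ^ 2 * qs)) / qs) := by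
  subst hη
  intro po ps hne
  have hd : (0:ℝ) < qo - qs := by linarith
  have hqo : (0:ℝ) < qo := by linarith
  have hη0 : 0 < γo + γs := by linarith
  have h2γo : (γo + γs) * qs < γo * (2 * qo) := by
    rwa [div_lt_iff₀ (by positivity)] at hC1l
  have hDpos : 0 < 4 * γo * γs * qo - (γo + γs) ^ 2 * qs := by
    nlinarith [mul_pos hη0 hqs, mul_pos hγo hγs]
  have hD0 : 4 * γo * γs * qo - (γo + γs) ^ 2 * qs ≠ 0 := ne_of_gt hDpos
  set b := (γo + γs) * γo * qs * (qo - qs) / (4 * γo * γs * qo - (γo + γs) ^ 2 * qs) with hb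
  set a := 2 * γo * γs * qo * (qo - qs) / (4 * γo * γs * qo - (γo + γs) ^ 2 * qs) with ha
  have e1 : γo * (qo - qs) - 2 * γo * a + (γo + γs) * b = 0 := by
    rw [ha, hb]; rw [mul_div_assoc', mul_div_assoc', sub_add, sub_eq_zero, ← sub_div, eq_div_iff hD0]; ring
  have e2 : (γo + γs) * a * qs - 2 * γs * qo * b = 0 := by
    rw [ha, hb]; field_simp; ring
  have hkey := revenue_aux qo qs γo γs a b po ps (ne_of_gt hd) (ne_of_gt hqs) (ne_of_gt hγo) e1 e2
  have hc1 : 0 < γo / (qo - qs) := by positivity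
  have hc2 : 0 < (4 * γo * γs * qo - (γo + γs) ^ 2 * qs) / (4 * γo * (qo - qs) * qs) := by
    positivity
  by_cases hps : ps = b
  · have hpo : po ≠ a := fun h => hne (by rw [h, hps])
    have h1 : 0 < (po - a - (γo + γs) * (ps - b) / (2 * γo)) ^ 2 := by
      rw [hps, sub_self, mul_zero, zero_div, sub_zero]
      have := pow_pos (abs_pos.mpr (sub_ne_zero_of_ne hpo)) 2
      rwa [sq_abs] at this
    nlinarith [sq_nonneg (ps - b)]
  · have h2 : 0 < (ps - b) ^ 2 := by
      have := pow_pos (abs_pos.mpr (sub_ne_zero_of_ne hps)) 2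
      rwa [sq_abs] at this
    nlinarith [sq_nonneg (po - a - (γo + γs) * (ps - b) / (2 * γo))]
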